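/- (Perfect alignment for ResNets with adaptive learning rates.) Suppose each weight matrix W_l(t) of a linear residual network evolves as dW_l/dt = α_l W̃_{L−1:l+1}ᵀ S̃⁻¹ r x*_lᵀ with layer-specific learning rates α_l = (x*_lᵀ x̂_{l−1})⁻¹, where x*_lᵀ x̂_{l−1} ≠ 0 for every l = 1, …, L−1. Then the change in the model prediction is exactly the output residual: dŷ/dt = r. -/

import Mathlib

open Matrix

private lemma entry_mul_deriv {N : ℕ} (A B : ℝ → Matrix (Fin N) (Fin N) ℝ)
    (A' B' : Matrix (Fin N) (Fin N) ℝ) (t₀ : ℝ)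
    (hA : ∀ i j, HasDerivAt (fun t => A t i j) (A' i j) t₀)
    (hB : ∀ i j, HasDerivAt (fun t => B t i j) (B' i j) t₀)
    (i j : Fin N) :
    HasDerivAt (fun t => (A t * B t) i j)
      ((A' * B t₀ + A t₀ * B') i j) t₀ := by
  have h : HasDerivAt (fun t => ∑ k, A t i k * B t k j)
      (∑ k, (A' i k * B t₀ k j + A t₀ i k * B' k j)) t₀ :=
    HasDerivAt.fun_sum (fun k _ => (hA i k).mul (hB k j))
  have he : (fun t => (A t * B t) i j) = fun t => ∑ k, A t i k * B t k j := by
    funext t; rw [Matrix.mul_apply]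
  rw [he]
  convert h using 1
  simp [Matrix.add_apply, Matrix.mul_apply, Finset.sum_add_distrib]

private lemma vecMulVec_mulVec' {N : ℕ} (r w v : Fin N → ℝ) :
    vecMulVec r w *ᵥ v = (w ⬝ᵥ v) • r := by
  funext i
  simp [Matrix.mulVec, Matrix.vecMulVec_apply, dotProduct, Finset.mul_sum,
    mul_comm, mul_assoc, mul_left_comm]

/-- **Perfect alignment for ResNets with adaptive learning rates.**
Suppose each weight matrix `W_l(t)` of a linear residual network evolves as
`dW_l/dt = α_l W̃_{L−1:l+1}ᵀ S̃⁻¹ r x*_lᵀ` with layer-specific learning rates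
`α_l = (x*_lᵀ x̂_{l−1})⁻¹`, where `x*_lᵀ x̂_{l−1} ≠ 0` for every `l = 1, …, L−1`.
Then the change in the model prediction is exactly the output residual:
`dŷ/dt = r`.
Here `P l t = W̃_{L−1:l+1}(t)`, `Q l t = W̃_{l:1}(t)`, `x̂_l = W̃_{l:1} x`,
`r = y − ŷ`, and `S̃ = ∑_{k=1}^{L−1} W̃_{L−1:k+1} W̃_{L−1:k+1}ᵀ` (invertible). -/
theorem stmt19
    (L N : ℕ) (hL : 2 ≤ L)
    (W : ℕ → ℝ → Matrix (Fin N) (Fin N) ℝ)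
    (P Q : ℕ → ℝ → Matrix (Fin N) (Fin N) ℝ)
    (hPtop : ∀ t : ℝ, P (L - 1) t = 1)
    (hP : ∀ t : ℝ, ∀ l : ℕ, l < L - 1 → P l t = P (l + 1) t * (1 + W (l + 1) t))
    (hQ0 : ∀ t : ℝ, Q 0 t = 1)
    (hQ : ∀ t : ℝ, ∀ l : ℕ, 1 ≤ l → l ≤ L - 1 → Q l t = (1 + W l t) * Q (l - 1) t)
    (x y : Fin N → ℝ) (t₀ : ℝ)
    (xs : ℕ → Fin N → ℝ)
    (hS : IsUnit (∑ k ∈ Finset.Icc 1 (L - 1), P k t₀ * (P k t₀)ᵀ).det)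
    (hne : ∀ l : ℕ, 1 ≤ l → l ≤ L - 1 → xs l ⬝ᵥ (Q (l - 1) t₀ *ᵥ x) ≠ 0)
    (hW : ∀ l : ℕ, 1 ≤ l → l ≤ L - 1 → ∀ i j, HasDerivAt (fun t => W l t i j)
      ((xs l ⬝ᵥ (Q (l - 1) t₀ *ᵥ x))⁻¹ •
        (((P l t₀)ᵀ * ((∑ k ∈ Finset.Icc 1 (L - 1), P k t₀ * (P k t₀)ᵀ)⁻¹ *
          vecMulVec (y - P 0 t₀ *ᵥ x) (xs l))) i j)) t₀) :
    HasDerivAt (fun t => P 0 t *ᵥ x) (y - P 0 t₀ *ᵥ x) t₀ := by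
  set r : Fin N → ℝ := y - P 0 t₀ *ᵥ x with hr
  set S : Matrix (Fin N) (Fin N) ℝ := ∑ k ∈ Finset.Icc 1 (L - 1), P k t₀ * (P k t₀)ᵀ with hSdef
  set u : Fin N → ℝ := S⁻¹ *ᵥ r with hu
  -- main downward induction
  have key : ∀ d : ℕ, d ≤ L - 1 → ∃ M : Matrix (Fin N) (Fin N) ℝ,
      (∀ i j, HasDerivAt (fun t => P (L - 1 - d) t i j) (M i j) t₀) ∧
      M *ᵥ (Q (L - 1 - d) t₀ *ᵥ x) =
        (∑ k ∈ Finset.Icc (L - 1 - d + 1) (L - 1), P k t₀ * (P k t₀)ᵀ) *ᵥ u := by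
    intro d
    induction d with
    | zero =>
      intro _
      refine ⟨0, fun i j => ?_, ?_⟩
      · have he : (fun t => P (L - 1 - 0) t i j) = fun _ => (1 : Matrix (Fin N) (Fin N) ℝ) i j := by
          funext t; simp [hPtop t]
        rw [he]
        simpa using hasDerivAt_const t₀ ((1 : Matrix (Fin N) (Fin N) ℝ) i j)
      · have : Finset.Icc (L - 1 - 0 + 1) (L - 1) = ∅ := by
          apply Finset.Icc_eq_empty; omega
        simp [this, Matrix.zero_mulVec]
    | succ d ih =>
      intro hd
      set m := L - 1 - (d + 1) with hm
      have hm1 : m + 1 = L - 1 - d := by omega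
      have hmlt : m < L - 1 := by omega
      have h1le : 1 ≤ m + 1 := by omega
      have hle : m + 1 ≤ L - 1 := by omega
      obtain ⟨M', hM'd, hM'e⟩ := ih (by omega)
      rw [← hm1] at hM'd hM'e
      -- derivative of W (m+1)
      set c : ℝ := xs (m + 1) ⬝ᵥ (Q m t₀ *ᵥ x) with hc
      have hcne : c ≠ 0 := by
        have := hne (m + 1) h1le hle
        simpa using this
      set D : Matrix (Fin N) (Fin N) ℝ :=
        c⁻¹ • ((P (m + 1) t₀)ᵀ * (S⁻¹ * vecMulVec r (xs (m + 1)))) with hD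
      have hWd : ∀ i j, HasDerivAt (fun t => W (m + 1) t i j) (D i j) t₀ := by
        intro i j
        have := hW (m + 1) h1le hle i j
        simpa [hD, hc, Matrix.smul_apply] using this
      refine ⟨M' * (1 + W (m + 1) t₀) + P (m + 1) t₀ * D, fun i j => ?_, ?_⟩
      · have he : (fun t => P m t i j) =
            fun t => (P (m + 1) t * (1 + W (m + 1) t)) i j := by
          funext t; rw [hP t m hmlt]
        rw [he]
        exact entry_mul_deriv (fun t => P (m + 1) t) (fun t => 1 + W (m + 1) t) M' D t₀
          hM'd (fun i j => by
            have : (fun t => (1 + W (m + 1) t) i j) =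
                fun t => (1 : Matrix (Fin N) (Fin N) ℝ) i j + W (m + 1) t i j := by
              funext t; simp [Matrix.add_apply]
            rw [this]
            exact (hWd i j).const_add _) i j
      · have hQstep : (1 + W (m + 1) t₀) * Q m t₀ = Q (m + 1) t₀ := by
          have := hQ t₀ (m + 1) h1le hle
          simp only [Nat.add_sub_cancel] at this
          rw [this]
        have hDv : D *ᵥ (Q m t₀ *ᵥ x) = (P (m + 1) t₀)ᵀ *ᵥ u := by
          rw [hD, Matrix.smul_mulVec, ← Matrix.mulVec_mulVec, ← Matrix.mulVec_mulVec,
            vecMulVec_mulVec', ← hc]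
          rw [Matrix.mulVec_smul, Matrix.mulVec_smul, smul_smul, inv_mul_cancel₀ hcne, one_smul]
        have hsum : Finset.Icc (m + 1) (L - 1) = insert (m + 1) (Finset.Icc (m + 2) (L - 1)) :=
          (Finset.insert_Icc_add_one_left_eq_Icc hle).symm
        have e1 : (M' * (1 + W (m + 1) t₀)) *ᵥ (Q m t₀ *ᵥ x) = M' *ᵥ (Q (m + 1) t₀ *ᵥ x) := by
          rw [Matrix.mulVec_mulVec, Matrix.mul_assoc, hQstep, ← Matrix.mulVec_mulVec]
        have e2 : (P (m + 1) t₀ * D) *ᵥ (Q m t₀ *ᵥ x) =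
            (P (m + 1) t₀ * (P (m + 1) t₀)ᵀ) *ᵥ u := by
          rw [← Matrix.mulVec_mulVec (Q m t₀ *ᵥ x) (P (m + 1) t₀) D, hDv, Matrix.mulVec_mulVec]
        rw [Matrix.add_mulVec, e1, e2, hM'e, hsum, Finset.sum_insert (by simp),
          Matrix.add_mulVec, add_comm]
  -- conclude
  obtain ⟨M, hMd, hMe⟩ := key (L - 1) le_rfl
  have hz : L - 1 - (L - 1) = 0 := Nat.sub_self _
  rw [hz] at hMd hMe
  rw [hQ0 t₀, Matrix.one_mulVec] at hMe
  have hzero : 0 + 1 = 1 := by norm_num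
  rw [hzero] at hMe
  have hMx : M *ᵥ x = r := by
    rw [hMe, hu, Matrix.mulVec_mulVec, ← hSdef, Matrix.mul_nonsing_inv S hS, Matrix.one_mulVec]
  rw [hr] at hMx ⊢
  rw [hasDerivAt_pi]
  intro i
  have he : (fun t => (P 0 t *ᵥ x) i) = fun t => ∑ j, P 0 t i j * x j := by
    funext t; simp [Matrix.mulVec, dotProduct]
  rw [he]
  have h : HasDerivAt (fun t => ∑ j, P 0 t i j * x j) (∑ j, M i j * x j) t₀ :=
    HasDerivAt.fun_sum (fun j _ => (hMd i j).mul_const (x j))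
  refine h.congr_deriv ?_
  rw [← hMx]
  simp [Matrix.mulVec, dotProduct]
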